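/- arXiv:2101.10422 — 2 statements merged into one kernel-verified Lean document; each statement's English description precedes it below -/
import Mathlib

section
/- Let V, W be super vector spaces with queer structures α, β (odd involutions squaring to the identity). Let ζ² = −1, and let U_ζ and U_{−ζ} be the ζ- and (−ζ)-eigenspaces of α⊗β on V⊗W. Then V⊗W = U_ζ ⊕ U_{−ζ}, and the map α⊗1 restricts to a linear isomorphism U_ζ → U_{−ζ}. -/
open TensorProduct

/-- For queer structures `α, β` on `V, W`, the operator `γ = α⊗β` (with the
Koszul sign) has `V⊗W` as the direct sum of its `ζ`- and `(-ζ)`-eigenspaces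
(where `ζ² = -1`), and `δ = α⊗1` restricts to a linear isomorphism from the
`ζ`-eigenspace onto the `(-ζ)`-eigenspace. Eigenspaces are expressed as
`ker (γ - ζ•id)` and `ker (γ + ζ•id)`. -/
theorem half_tensor_decomposition (ζ : ℂ) (hζ : ζ ^ 2 = -1)
    (V W : Type) [AddCommGroup V] [Module ℂ V] [AddCommGroup W] [Module ℂ W]
    (V₀ V₁ : Submodule ℂ V) (W₀ W₁ : Submodule ℂ W)
    (hV : V₀ ⊔ V₁ = ⊤) (hW : W₀ ⊔ W₁ = ⊤)
    (α : V →ₗ[ℂ] V) (β : W →ₗ[ℂ] W)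
    (hα0 : ∀ v ∈ V₀, α v ∈ V₁) (hα1 : ∀ v ∈ V₁, α v ∈ V₀)
    (hβ0 : ∀ w ∈ W₀, β w ∈ W₁) (hβ1 : ∀ w ∈ W₁, β w ∈ W₀)
    (hα2 : ∀ v, α (α v) = v) (hβ2 : ∀ w, β (β w) = w)
    (γ δ : TensorProduct ℂ V W →ₗ[ℂ] TensorProduct ℂ V W)
    (hγ0 : ∀ v ∈ V₀, ∀ w : W, γ (v ⊗ₜ[ℂ] w) = α v ⊗ₜ[ℂ] β w)
    (hγ1 : ∀ v ∈ V₁, ∀ w : W, γ (v ⊗ₜ[ℂ] w) = -(α v ⊗ₜ[ℂ] β w))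
    (hδ : ∀ (v : V) (w : W), δ (v ⊗ₜ[ℂ] w) = α v ⊗ₜ[ℂ] w) :
    (LinearMap.ker (γ - ζ • (LinearMap.id : TensorProduct ℂ V W →ₗ[ℂ] TensorProduct ℂ V W)) ⊓
      LinearMap.ker (γ + ζ • (LinearMap.id : TensorProduct ℂ V W →ₗ[ℂ] TensorProduct ℂ V W)) = ⊥) ∧
    (LinearMap.ker (γ - ζ • (LinearMap.id : TensorProduct ℂ V W →ₗ[ℂ] TensorProduct ℂ V W)) ⊔
      LinearMap.ker (γ + ζ • (LinearMap.id : TensorProduct ℂ V W →ₗ[ℂ] TensorProduct ℂ V W)) = ⊤) ∧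
    (∀ z ∈ LinearMap.ker (γ - ζ • (LinearMap.id : TensorProduct ℂ V W →ₗ[ℂ] TensorProduct ℂ V W)),
      δ z ∈ LinearMap.ker (γ + ζ • (LinearMap.id : TensorProduct ℂ V W →ₗ[ℂ] TensorProduct ℂ V W))) ∧
    Set.BijOn (⇑δ)
      (LinearMap.ker (γ - ζ • (LinearMap.id : TensorProduct ℂ V W →ₗ[ℂ] TensorProduct ℂ V W)) : Set (TensorProduct ℂ V W))
      (LinearMap.ker (γ + ζ • (LinearMap.id : TensorProduct ℂ V W →ₗ[ℂ] TensorProduct ℂ V W)) : Set (TensorProduct ℂ V W)) := by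
  have hζ0 : ζ ≠ 0 := by
    intro h; rw [h] at hζ; norm_num at hζ
  have hζζ : ∀ z : TensorProduct ℂ V W, ζ • ζ • z = -z := by
    intro z
    rw [smul_smul, ← pow_two, hζ, neg_one_smul]
  -- γ ∘ γ = -id
  have hγ2 : ∀ z, γ (γ z) = -z := by
    intro z
    induction z using TensorProduct.induction_on with
    | zero => simp
    | add x y hx hy => rw [map_add, map_add, hx, hy, neg_add]
    | tmul v w =>
      obtain ⟨a, ha, b, hb, rfl⟩ :=
        Submodule.mem_sup.mp (show v ∈ V₀ ⊔ V₁ by rw [hV]; trivial)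
      simp only [add_tmul, map_add, map_neg, hγ0 a ha, hγ1 b hb,
        hγ1 (α a) (hα0 a ha), hγ0 (α b) (hα1 b hb), hα2, hβ2]
      abel
  -- γ and δ anticommute
  have hγδ : ∀ z, γ (δ z) = -δ (γ z) := by
    intro z
    induction z using TensorProduct.induction_on with
    | zero => simp
    | add x y hx hy =>
      simp only [map_add, hx, hy]
      abel
    | tmul v w =>
      obtain ⟨a, ha, b, hb, rfl⟩ :=
        Submodule.mem_sup.mp (show v ∈ V₀ ⊔ V₁ by rw [hV]; trivial)
      simp only [add_tmul, map_add, map_neg, hδ, hγ0 a ha, hγ1 b hb,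
        hγ1 (α a) (hα0 a ha), hγ0 (α b) (hα1 b hb), hα2, hβ2]
      abel
  -- δ ∘ δ = id
  have hδ2 : ∀ z, δ (δ z) = z := by
    intro z
    induction z using TensorProduct.induction_on with
    | zero => simp
    | add x y hx hy => rw [map_add, map_add, hx, hy]
    | tmul v w => rw [hδ, hδ, hα2]
  have hmemP : ∀ z, z ∈ LinearMap.ker (γ - ζ • (LinearMap.id :
      TensorProduct ℂ V W →ₗ[ℂ] TensorProduct ℂ V W)) ↔ γ z = ζ • z := by
    intro z
    rw [LinearMap.mem_ker, LinearMap.sub_apply, LinearMap.smul_apply,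
      LinearMap.id_apply, sub_eq_zero]
  have hmemM : ∀ z, z ∈ LinearMap.ker (γ + ζ • (LinearMap.id :
      TensorProduct ℂ V W →ₗ[ℂ] TensorProduct ℂ V W)) ↔ γ z = -(ζ • z) := by
    intro z
    rw [LinearMap.mem_ker, LinearMap.add_apply, LinearMap.smul_apply,
      LinearMap.id_apply, add_eq_zero_iff_eq_neg]
  refine ⟨?_, ?_, ?_, ?_⟩
  · rw [Submodule.eq_bot_iff]
    intro z hz
    obtain ⟨h1, h2⟩ := Submodule.mem_inf.mp hz
    rw [hmemP] at h1
    rw [hmemM] at h2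
    have h12 : ζ • z = -(ζ • z) := h1 ▸ h2
    have h3 : ζ • z = 0 := by
      have h4 : (2 : ℂ) • ζ • z = 0 := by
        rw [two_smul]
        rw [eq_neg_iff_add_eq_zero] at h12
        exact h12
      simpa using (smul_eq_zero.mp h4).resolve_left (by norm_num)
    exact (smul_eq_zero.mp h3).resolve_left hζ0
  · rw [eq_top_iff]
    intro z _
    have h1 : z - ζ • γ z ∈ LinearMap.ker (γ - ζ • (LinearMap.id :
        TensorProduct ℂ V W →ₗ[ℂ] TensorProduct ℂ V W)) := by
      rw [hmemP, map_sub, map_smul, hγ2, smul_neg, smul_sub, hζζ, sub_neg_eq_add,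
        sub_neg_eq_add, add_comm]
    have h2 : z + ζ • γ z ∈ LinearMap.ker (γ + ζ • (LinearMap.id :
        TensorProduct ℂ V W →ₗ[ℂ] TensorProduct ℂ V W)) := by
      rw [hmemM, map_add, map_smul, hγ2, smul_neg, smul_add, hζζ, neg_add,
        neg_neg, add_comm]
    have hz2 : z = (2:ℂ)⁻¹ • (z - ζ • γ z) + (2:ℂ)⁻¹ • (z + ζ • γ z) := by
      rw [← smul_add]
      have h5 : z - ζ • γ z + (z + ζ • γ z) = (2:ℂ) • z := by
        rw [two_smul]; abel
      rw [h5, smul_smul]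
      norm_num
    rw [hz2]
    exact Submodule.add_mem_sup (Submodule.smul_mem _ _ h1) (Submodule.smul_mem _ _ h2)
  · intro z hz
    rw [hmemP] at hz
    rw [hmemM, hγδ, hz, map_smul]
  · have hmaps : ∀ z ∈ LinearMap.ker (γ - ζ • (LinearMap.id :
        TensorProduct ℂ V W →ₗ[ℂ] TensorProduct ℂ V W)),
        δ z ∈ LinearMap.ker (γ + ζ • (LinearMap.id :
        TensorProduct ℂ V W →ₗ[ℂ] TensorProduct ℂ V W)) := by
      intro z hz
      rw [hmemP] at hz
      rw [hmemM, hγδ, hz, map_smul]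
    refine ⟨hmaps, fun x _ y _ h => ?_, fun y hy => ?_⟩
    · have h' := congrArg δ h
      rwa [hδ2, hδ2] at h'
    · refine ⟨δ y, ?_, hδ2 y⟩
      have hy' : γ y = -(ζ • y) := (hmemM y).mp hy
      have : δ y ∈ LinearMap.ker (γ - ζ • (LinearMap.id :
          TensorProduct ℂ V W →ₗ[ℂ] TensorProduct ℂ V W)) := by
        rw [hmemP, hγδ, hy', map_neg, map_smul, neg_neg]
      exact this
end

section
/- In the ring Λ of symmetric functions, the Schur Q-functions satisfy the Pieri-type rule Q₁ · Q_λ = Σ_{μ ⊃ λ, ℓ(μ)=ℓ(λ)} 2 Q_μ + Σ_{μ ⊃ λ, ℓ(μ)=ℓ(λ)+1} Q_μ, where λ is a strict partition of n and μ ranges over strict partitions of n+1 containing λ. -/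
/-- A strict partition: parts strictly decrease until they reach 0. -/
structure StrictPartition where
  parts : ℕ → ℕ
  decr : ∀ i, parts (i + 1) < parts i ∨ parts (i + 1) = 0

/-- The number of (nonzero) parts of a strict partition. -/
noncomputable def StrictPartition.len (p : StrictPartition) : ℕ :=
  sInf {n | p.parts n = 0}

/-- The Schur Q-function `Q_p` (for a sequence of parts `p` with `k` nonzero
parts) in `n` variables, as an element of the fraction field of
`ℚ[x₁,…,xₙ]`, via Macdonald's formula
`Q_p = 2^k (n-k)!⁻¹ Σ_{w ∈ Sₙ} w( x^p ∏_{i ≤ k, i < j} (xᵢ+xⱼ)/(xᵢ-xⱼ) )`. -/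
noncomputable def schurQ (n : ℕ) (p : ℕ → ℕ) (k : ℕ) :
    FractionRing (MvPolynomial (Fin n) ℚ) :=
  let X : Fin n → FractionRing (MvPolynomial (Fin n) ℚ) := fun i =>
    algebraMap (MvPolynomial (Fin n) ℚ) (FractionRing (MvPolynomial (Fin n) ℚ))
      (MvPolynomial.X i)
  ((2 : FractionRing (MvPolynomial (Fin n) ℚ)) ^ k *
      ((Nat.factorial (n - k) : FractionRing (MvPolynomial (Fin n) ℚ)))⁻¹) *
    ∑ w : Equiv.Perm (Fin n),
      (∏ i : Fin n, X (w i) ^ p i.val) *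
      ∏ pr ∈ Finset.univ.filter
          (fun pr : Fin n × Fin n => pr.1 < pr.2 ∧ pr.1.val < k),
        (X (w pr.1) + X (w pr.2)) / (X (w pr.1) - X (w pr.2))


open Finset

variable {F : Type*} [Field F] {ι : Type*} [DecidableEq ι]

lemma partialFraction (x : ι → F) :
    ∀ (S : Finset ι), (∀ i ∈ S, ∀ j ∈ S, i ≠ j → x i ≠ x j) →
      ∀ t : F, (∀ i ∈ S, t ≠ x i) →
    ∏ i ∈ S, (t + x i) / (t - x i) =
      1 + ∑ i ∈ S, 2 * x i / (t - x i) * ∏ j ∈ S.erase i, (x i + x j) / (x i - x j) := by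
  intro S
  induction S using Finset.induction_on with
  | empty => simp
  | @insert a S ha ih =>
    intro hx t ht
    have hxS : ∀ i ∈ S, ∀ j ∈ S, i ≠ j → x i ≠ x j := fun i hi j hj =>
      hx i (mem_insert_of_mem hi) j (mem_insert_of_mem hj)
    have hta : t ≠ x a := ht a (mem_insert_self a S)
    have htS : ∀ i ∈ S, t ≠ x i := fun i hi => ht i (mem_insert_of_mem hi)
    have haS : ∀ i ∈ S, x a ≠ x i := fun i hi =>
      hx a (mem_insert_self a S) i (mem_insert_of_mem hi) (fun h => ha (h ▸ hi))
    rw [Finset.prod_insert ha, Finset.sum_insert ha, ih hxS t htS, Finset.erase_insert ha,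
      ih hxS (x a) haS]
    have hrw : ∀ i ∈ S, 2 * x i / (t - x i) * ∏ j ∈ (insert a S).erase i, (x i + x j) / (x i - x j)
        = 2 * x i / (t - x i) * ((x i + x a) / (x i - x a) *
            ∏ j ∈ S.erase i, (x i + x j) / (x i - x j)) := by
      intro i hi
      have hne : a ≠ i := fun h => ha (h ▸ hi)
      rw [Finset.erase_insert_of_ne hne, Finset.prod_insert (fun h => ha (Finset.mem_of_mem_erase h))]
    rw [Finset.sum_congr rfl hrw, mul_add, Finset.mul_sum, mul_add, Finset.mul_sum]
    have key : ∀ i ∈ S, (t + x a) / (t - x a) *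
          (2 * x i / (t - x i) * ∏ j ∈ S.erase i, (x i + x j) / (x i - x j))
        = 2 * x a / (t - x a) * (2 * x i / (x a - x i) * ∏ j ∈ S.erase i, (x i + x j) / (x i - x j))
          + 2 * x i / (t - x i) * ((x i + x a) / (x i - x a) *
              ∏ j ∈ S.erase i, (x i + x j) / (x i - x j)) := by
      intro i hi
      have h1 : t - x a ≠ 0 := sub_ne_zero.mpr hta
      have h2 : t - x i ≠ 0 := sub_ne_zero.mpr (htS i hi)
      have h3 : x a - x i ≠ 0 := sub_ne_zero.mpr (haS i hi)
      have h4 : x i - x a ≠ 0 := sub_ne_zero.mpr (fun h => (haS i hi) h.symm)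
      have base : (t + x a) / (t - x a) * (2 * x i / (t - x i))
          = 2 * x a / (t - x a) * (2 * x i / (x a - x i))
            + 2 * x i / (t - x i) * ((x i + x a) / (x i - x a)) := by
        field_simp
        ring
      linear_combination (∏ j ∈ S.erase i, (x i + x j) / (x i - x j)) * base
    have head : (t + x a) / (t - x a) * 1 = 1 + 2 * x a / (t - x a) * 1 := by
      have h1 : t - x a ≠ 0 := sub_ne_zero.mpr hta
      field_simp
      ring
    rw [Finset.sum_congr rfl key, Finset.sum_add_distrib]
    rw [head]
    ring

lemma sumT (x : ι → F) :
    ∀ (S : Finset ι), (∀ i ∈ S, ∀ j ∈ S, i ≠ j → x i ≠ x j) →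
    ∑ i ∈ S, x i * ∏ j ∈ S.erase i, (x i + x j) / (x i - x j) = ∑ i ∈ S, x i := by
  intro S
  induction S using Finset.induction_on with
  | empty => simp
  | @insert a S ha ih =>
    intro hx
    have hxS : ∀ i ∈ S, ∀ j ∈ S, i ≠ j → x i ≠ x j := fun i hi j hj =>
      hx i (mem_insert_of_mem hi) j (mem_insert_of_mem hj)
    have haS : ∀ i ∈ S, x a ≠ x i := fun i hi =>
      hx a (mem_insert_self a S) i (mem_insert_of_mem hi) (fun h => ha (h ▸ hi))
    rw [Finset.sum_insert ha, Finset.sum_insert ha, Finset.erase_insert ha,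
      partialFraction x S hxS (x a) haS]
    have hrw : ∀ i ∈ S, x i * ∏ j ∈ (insert a S).erase i, (x i + x j) / (x i - x j)
        = x i * ((x i + x a) / (x i - x a) * ∏ j ∈ S.erase i, (x i + x j) / (x i - x j)) := by
      intro i hi
      have hne : a ≠ i := fun h => ha (h ▸ hi)
      rw [Finset.erase_insert_of_ne hne, Finset.prod_insert (fun h => ha (Finset.mem_of_mem_erase h))]
    rw [Finset.sum_congr rfl hrw]
    have key : ∀ i ∈ S, x a * (2 * x i / (x a - x i) * ∏ j ∈ S.erase i, (x i + x j) / (x i - x j))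
          + x i * ((x i + x a) / (x i - x a) * ∏ j ∈ S.erase i, (x i + x j) / (x i - x j))
        = x i * ∏ j ∈ S.erase i, (x i + x j) / (x i - x j) := by
      intro i hi
      have h3 : x a - x i ≠ 0 := sub_ne_zero.mpr (haS i hi)
      have h4 : x i - x a ≠ 0 := sub_ne_zero.mpr (fun h => (haS i hi) h.symm)
      have base : x a * (2 * x i / (x a - x i)) + x i * ((x i + x a) / (x i - x a)) = x i := by
        field_simp
        ring
      linear_combination (∏ j ∈ S.erase i, (x i + x j) / (x i - x j)) * base
    calc x a * (1 + ∑ i ∈ S, 2 * x i / (x a - x i) * ∏ j ∈ S.erase i, (x i + x j) / (x i - x j))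
        + ∑ i ∈ S, x i * ((x i + x a) / (x i - x a) * ∏ j ∈ S.erase i, (x i + x j) / (x i - x j))
        = x a + ∑ i ∈ S, (x a * (2 * x i / (x a - x i) * ∏ j ∈ S.erase i, (x i + x j) / (x i - x j))
            + x i * ((x i + x a) / (x i - x a) * ∏ j ∈ S.erase i, (x i + x j) / (x i - x j))) := by
          rw [mul_add, Finset.mul_sum, mul_one, Finset.sum_add_distrib]; ring
      _ = x a + ∑ i ∈ S, x i * ∏ j ∈ S.erase i, (x i + x j) / (x i - x j) := by
          rw [Finset.sum_congr rfl key]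
      _ = x a + ∑ i ∈ S, x i := by rw [ih hxS]


open Finset

noncomputable section SchurAux

abbrev SK (n : ℕ) := FractionRing (MvPolynomial (Fin n) ℚ)

variable {n : ℕ}

def XX (i : Fin n) : SK n := algebraMap (MvPolynomial (Fin n) ℚ) (SK n) (MvPolynomial.X i)

lemma XX_inj {i j : Fin n} (h : i ≠ j) : XX i ≠ XX j := fun he =>
  h (MvPolynomial.X_injective (IsFractionRing.injective (MvPolynomial (Fin n) ℚ) (SK n) he))

lemma XX_sub_ne {i j : Fin n} (h : i ≠ j) : XX i - XX j ≠ 0 :=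
  sub_ne_zero.mpr (XX_inj h)

def sf (i j : Fin n) : SK n := (XX i + XX j) / (XX i - XX j)

lemma sf_symm (i j : Fin n) : sf i j = - sf j i := by
  unfold sf
  rw [add_comm (XX j), ← div_neg, neg_sub]

def Pk (n k : ℕ) : Finset (Fin n × Fin n) :=
  Finset.univ.filter (fun pr : Fin n × Fin n => pr.1 < pr.2 ∧ pr.1.val < k)

lemma mem_Pk {k : ℕ} {pr : Fin n × Fin n} : pr ∈ Pk n k ↔ pr.1 < pr.2 ∧ pr.1.val < k := by
  simp [Pk]

def cross (k : ℕ) (w : Equiv.Perm (Fin n)) : SK n := ∏ pr ∈ Pk n k, sf (w pr.1) (w pr.2)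

def mono (p : ℕ → ℕ) (w : Equiv.Perm (Fin n)) : SK n := ∏ i : Fin n, XX (w i) ^ p i.val

def G (n : ℕ) (p : ℕ → ℕ) (k : ℕ) : SK n := ∑ w : Equiv.Perm (Fin n), mono p w * cross k w

lemma schurQ_eq (p : ℕ → ℕ) (k : ℕ) :
    schurQ n p k = ((2 : SK n) ^ k * ((Nat.factorial (n - k) : SK n))⁻¹) * G n p k := rfl

/-- reindexing the permutation sum -/
lemma sum_perm_comp (f : Equiv.Perm (Fin n) → SK n) (τ : Equiv.Perm (Fin n)) :
    ∑ w : Equiv.Perm (Fin n), f (w * τ) = ∑ w : Equiv.Perm (Fin n), f w :=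
  Equiv.sum_comp (Equiv.mulRight τ) f

lemma mono_comp (p : ℕ → ℕ) (w τ : Equiv.Perm (Fin n)) :
    mono p (w * τ) = ∏ i : Fin n, XX (w i) ^ p (τ⁻¹ i).val := by
  unfold mono
  exact Fintype.prod_equiv τ _ _ (fun i => by simp)

lemma mono_comp_eq (p : ℕ → ℕ) (w τ : Equiv.Perm (Fin n))
    (h : ∀ i : Fin n, p (τ⁻¹ i).val = p i.val) : mono p (w * τ) = mono p w := by
  rw [mono_comp]
  exact Finset.prod_congr rfl (fun i _ => by rw [h])

lemma cross_swap_tail {k : ℕ} {a b : Fin n} (ha : k ≤ a.val) (hb : k ≤ b.val)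
    (w : Equiv.Perm (Fin n)) : cross k (w * Equiv.swap a b) = cross k w := by
  unfold cross
  have key : ∀ pr ∈ Pk n k,
      ((Equiv.swap a b) pr.1, (Equiv.swap a b) pr.2) ∈ Pk n k := by
    intro pr hpr
    rw [mem_Pk] at hpr ⊢
    obtain ⟨hlt, hk⟩ := hpr
    have h1a : pr.1 ≠ a := fun h => by rw [← Fin.val_eq_val] at h; omega
    have h1b : pr.1 ≠ b := fun h => by rw [← Fin.val_eq_val] at h; omega
    rw [Equiv.swap_apply_of_ne_of_ne h1a h1b]
    refine ⟨?_, hk⟩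
    rcases eq_or_ne pr.2 a with h2a | h2a
    · rw [h2a, Equiv.swap_apply_left]
      show pr.1.val < b.val
      omega
    rcases eq_or_ne pr.2 b with h2b | h2b
    · rw [h2b, Equiv.swap_apply_right]
      show pr.1.val < a.val
      omega
    · rw [Equiv.swap_apply_of_ne_of_ne h2a h2b]
      exact hlt
  refine Finset.prod_nbij' (fun pr => ((Equiv.swap a b) pr.1, (Equiv.swap a b) pr.2))
    (fun pr => ((Equiv.swap a b) pr.1, (Equiv.swap a b) pr.2)) key key
    (fun pr _ => by simp) (fun pr _ => by simp) (fun pr _ => by simp [Equiv.Perm.mul_apply])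

lemma cross_swap_adj {k : ℕ} {a b : Fin n} (hab : a.val + 1 = b.val) (hbk : b.val < k)
    (w : Equiv.Perm (Fin n)) : cross k (w * Equiv.swap a b) = - cross k w := by
  have hne : a ≠ b := fun h => by rw [← Fin.val_eq_val] at h; omega
  have hmem : ((a, b) : Fin n × Fin n) ∈ Pk n k := by
    rw [mem_Pk]
    exact ⟨show a.val < b.val by omega, show a.val < k by omega⟩
  unfold cross
  rw [← Finset.mul_prod_erase (Pk n k) _ hmem]
  conv_rhs => rw [← Finset.mul_prod_erase (Pk n k) (fun pr => sf (w pr.1) (w pr.2)) hmem]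
  have hterm : sf ((w * Equiv.swap a b) a) ((w * Equiv.swap a b) b) = - sf (w a) (w b) := by
    simp only [Equiv.Perm.mul_apply, Equiv.swap_apply_left, Equiv.swap_apply_right]
    exact sf_symm _ _
  have key : ∀ pr ∈ (Pk n k).erase (a, b),
      ((Equiv.swap a b) pr.1, (Equiv.swap a b) pr.2) ∈ (Pk n k).erase (a, b) := by
    intro pr hpr
    rw [Finset.mem_erase, mem_Pk] at hpr ⊢
    obtain ⟨hpne, hlt, hk⟩ := hpr
    have hpne' : ¬(pr.1 = a ∧ pr.2 = b) := fun ⟨h1, h2⟩ => hpne (Prod.ext h1 h2)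
    have hltv : pr.1.val < pr.2.val := hlt
    rcases eq_or_ne pr.1 a with h1a | h1a
    · have h2b : pr.2 ≠ b := fun h => hpne' ⟨h1a, h⟩
      have h2a : pr.2 ≠ a := fun h => by
        rw [← Fin.val_eq_val] at h; omega
      rw [h1a, Equiv.swap_apply_left, Equiv.swap_apply_of_ne_of_ne h2a h2b]
      have h2bv : pr.2.val ≠ b.val := fun h => h2b (Fin.val_eq_val _ _ |>.mp h)
      rw [← Fin.val_eq_val] at h1a
      refine ⟨fun h => ?_, show b.val < pr.2.val by omega, show b.val < k by omega⟩
      · simp only [Prod.mk.injEq] at h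
        have := h.1
        rw [← Fin.val_eq_val] at this
        omega
    rcases eq_or_ne pr.1 b with h1b | h1b
    · have h2a : pr.2 ≠ a := fun h => by rw [← Fin.val_eq_val] at h h1b; omega
      have h2b : pr.2 ≠ b := fun h => by rw [← Fin.val_eq_val] at h; omega
      rw [h1b, Equiv.swap_apply_right, Equiv.swap_apply_of_ne_of_ne h2a h2b]
      rw [← Fin.val_eq_val] at h1b
      refine ⟨fun h => ?_, show a.val < pr.2.val by omega, show a.val < k by omega⟩
      · simp only [Prod.mk.injEq] at h
        have := h.2
        rw [← Fin.val_eq_val] at this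
        omega
    · rw [Equiv.swap_apply_of_ne_of_ne h1a h1b]
      have h1av : pr.1.val ≠ a.val := fun h => h1a (Fin.val_eq_val _ _ |>.mp h)
      have h1bv : pr.1.val ≠ b.val := fun h => h1b (Fin.val_eq_val _ _ |>.mp h)
      rcases eq_or_ne pr.2 a with h2a | h2a
      · rw [h2a, Equiv.swap_apply_left]
        rw [← Fin.val_eq_val] at h2a
        refine ⟨fun h => ?_, show pr.1.val < b.val by omega, hk⟩
        · simp only [Prod.mk.injEq] at h
          have := h.1
          rw [← Fin.val_eq_val] at this
          omega
      rcases eq_or_ne pr.2 b with h2b | h2b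
      · rw [h2b, Equiv.swap_apply_right]
        rw [← Fin.val_eq_val] at h2b
        refine ⟨fun h => ?_, show pr.1.val < a.val by omega, hk⟩
        · simp only [Prod.mk.injEq] at h
          have := h.2
          rw [← Fin.val_eq_val] at this
          omega
      · rw [Equiv.swap_apply_of_ne_of_ne h2a h2b]
        exact ⟨hpne, hlt, hk⟩
  have hprod : ∏ pr ∈ (Pk n k).erase (a, b),
      sf ((w * Equiv.swap a b) pr.1) ((w * Equiv.swap a b) pr.2)
      = ∏ pr ∈ (Pk n k).erase (a, b), sf (w pr.1) (w pr.2) := by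
    refine Finset.prod_nbij' (fun pr => ((Equiv.swap a b) pr.1, (Equiv.swap a b) pr.2))
      (fun pr => ((Equiv.swap a b) pr.1, (Equiv.swap a b) pr.2)) key key
      (fun pr _ => by simp) (fun pr _ => by simp) (fun pr _ => by simp [Equiv.Perm.mul_apply])
  rw [hprod, hterm]
  ring

lemma G_eq_zero_adj {k : ℕ} (p : ℕ → ℕ) {a b : Fin n} (hab : a.val + 1 = b.val)
    (hbk : b.val < k) (hp : p a.val = p b.val) : G n p k = 0 := by
  have hG : G n p k = - G n p k := by
    conv_lhs => rw [G, ← sum_perm_comp (fun w => mono p w * cross k w) (Equiv.swap a b)]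
    rw [G, ← Finset.sum_neg_distrib]
    refine Finset.sum_congr rfl (fun w _ => ?_)
    show mono p (w * Equiv.swap a b) * cross k (w * Equiv.swap a b) = -(mono p w * cross k w)
    rw [mono_comp_eq p w (Equiv.swap a b) ?_, cross_swap_adj hab hbk w]
    · ring
    · intro i
      rw [Equiv.swap_inv]
      rcases eq_or_ne i a with h | h
      · rw [h, Equiv.swap_apply_left, hp]
      rcases eq_or_ne i b with h' | h'
      · rw [h', Equiv.swap_apply_right, hp]
      · rw [Equiv.swap_apply_of_ne_of_ne h h']
  have h2 : (2 : SK n) * G n p k = 0 := by linear_combination hG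
  rcases mul_eq_zero.mp h2 with h | h
  · exact absurd h two_ne_zero
  · exact h

/-- the tail index set `{j | k ≤ j}` -/
def Tl (n k : ℕ) : Finset (Fin n) := Finset.univ.filter (fun j => k ≤ j.val)

lemma mem_Tl {k : ℕ} {j : Fin n} : j ∈ Tl n k ↔ k ≤ j.val := by simp [Tl]

lemma swap_tail_mem {k : ℕ} {Ka m : Fin n} (hKa : Ka ∈ Tl n k) (hm : m ∈ Tl n k)
    {j : Fin n} (hj : j ∈ Tl n k) : Equiv.swap Ka m j ∈ Tl n k := by
  rw [mem_Tl] at *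
  rcases eq_or_ne j Ka with h | h
  · rw [h, Equiv.swap_apply_left]; exact hm
  rcases eq_or_ne j m with h' | h'
  · rw [h', Equiv.swap_apply_right]; exact hKa
  · rw [Equiv.swap_apply_of_ne_of_ne h h']; exact hj

lemma mono_swap_tail {k : ℕ} (p : ℕ → ℕ) (hp : ∀ j : Fin n, k ≤ j.val → p j.val = 0)
    {Ka m : Fin n} (hKa : k ≤ Ka.val) (hm : k ≤ m.val) (w : Equiv.Perm (Fin n)) :
    mono p (w * Equiv.swap Ka m) = mono p w := by
  refine mono_comp_eq p w _ (fun i => ?_)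
  rw [Equiv.swap_inv]
  rcases eq_or_ne i Ka with h | h
  · rw [h, Equiv.swap_apply_left, hp m hm, hp Ka hKa]
  rcases eq_or_ne i m with h' | h'
  · rw [h', Equiv.swap_apply_right, hp m hm, hp Ka hKa]
  · rw [Equiv.swap_apply_of_ne_of_ne h h']

lemma sum_swap_factor {k : ℕ} (p : ℕ → ℕ) (hp : ∀ j : Fin n, k ≤ j.val → p j.val = 0)
    {Ka m : Fin n} (hKa : Ka ∈ Tl n k) (hm : m ∈ Tl n k) :
    ∑ w : Equiv.Perm (Fin n), mono p w * cross k w * XX (w Ka)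
      = ∑ w : Equiv.Perm (Fin n), mono p w * cross k w * XX (w m) := by
  rw [mem_Tl] at hKa hm
  rw [← sum_perm_comp (fun w => mono p w * cross k w * XX (w Ka)) (Equiv.swap Ka m)]
  refine Finset.sum_congr rfl (fun w _ => ?_)
  show mono p (w * Equiv.swap Ka m) * cross k (w * Equiv.swap Ka m)
      * XX ((w * Equiv.swap Ka m) Ka) = _
  rw [mono_swap_tail p hp hKa hm, cross_swap_tail hKa hm]
  congr 2
  show w (Equiv.swap Ka m Ka) = w m
  rw [Equiv.swap_apply_left]

lemma sum_swap_prod {k : ℕ} (p : ℕ → ℕ) (hp : ∀ j : Fin n, k ≤ j.val → p j.val = 0)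
    {Ka m : Fin n} (hKa : Ka ∈ Tl n k) (hm : m ∈ Tl n k) :
    ∑ w : Equiv.Perm (Fin n), mono p w * cross k w *
        (XX (w Ka) * ∏ j ∈ (Tl n k).erase Ka, sf (w Ka) (w j))
      = ∑ w : Equiv.Perm (Fin n), mono p w * cross k w *
        (XX (w m) * ∏ j ∈ (Tl n k).erase m, sf (w m) (w j)) := by
  have hKv := mem_Tl.mp hKa
  have hmv := mem_Tl.mp hm
  rw [← sum_perm_comp (fun w => mono p w * cross k w *
      (XX (w Ka) * ∏ j ∈ (Tl n k).erase Ka, sf (w Ka) (w j))) (Equiv.swap Ka m)]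
  refine Finset.sum_congr rfl (fun w _ => ?_)
  show mono p (w * Equiv.swap Ka m) * cross k (w * Equiv.swap Ka m) *
      (XX ((w * Equiv.swap Ka m) Ka)
        * ∏ j ∈ (Tl n k).erase Ka, sf ((w * Equiv.swap Ka m) Ka) ((w * Equiv.swap Ka m) j)) = _
  rw [mono_swap_tail p hp hKv hmv, cross_swap_tail hKv hmv]
  have hKm : (w * Equiv.swap Ka m) Ka = w m := by
    show w (Equiv.swap Ka m Ka) = w m
    rw [Equiv.swap_apply_left]
  rw [hKm]
  congr 1
  congr 1
  · -- product reindex via the swap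
    refine Finset.prod_nbij' (fun j => Equiv.swap Ka m j) (fun j => Equiv.swap Ka m j)
      ?_ ?_ (fun j _ => by simp) (fun j _ => by simp) (fun j hj => rfl)
    · intro j hj
      rw [Finset.mem_erase] at hj ⊢
      refine ⟨fun h => hj.1 ?_, swap_tail_mem hKa hm hj.2⟩
      · have := congrArg (Equiv.swap Ka m) h
        rw [Equiv.swap_apply_self, Equiv.swap_apply_right] at this
        exact this
    · intro j hj
      rw [Finset.mem_erase] at hj ⊢
      refine ⟨fun h => hj.1 ?_, swap_tail_mem hKa hm hj.2⟩
      · have := congrArg (Equiv.swap Ka m) h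
        rw [Equiv.swap_apply_self, Equiv.swap_apply_left] at this
        exact this

lemma sf_def (i j : Fin n) : sf i j = (XX i + XX j) / (XX i - XX j) := rfl

lemma mono_addOne (p : ℕ → ℕ) (a : Fin n) (w : Equiv.Perm (Fin n)) :
    mono (fun j => if j = a.val then p j + 1 else p j) w = XX (w a) * mono p w := by
  unfold mono
  rw [← Finset.mul_prod_erase Finset.univ _ (Finset.mem_univ a),
      ← Finset.mul_prod_erase Finset.univ (fun i => XX (w i) ^ p i.val) (Finset.mem_univ a)]
  have h1 : ∏ i ∈ Finset.univ.erase a, XX (w i) ^ (if i.val = a.val then p i.val + 1 else p i.val)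
      = ∏ i ∈ Finset.univ.erase a, XX (w i) ^ p i.val := by
    refine Finset.prod_congr rfl (fun i hi => ?_)
    have : i.val ≠ a.val := fun h =>
      (Finset.mem_erase.mp hi).1 ((Fin.val_eq_val i a).mp h)
    rw [if_neg this]
  have h2 : ((fun j => if j = a.val then p j + 1 else p j) a.val : ℕ) = p a.val + 1 := by simp
  rw [h1, h2, pow_succ]
  ring

lemma cross_succ {k : ℕ} (hk : k < n) (w : Equiv.Perm (Fin n)) :
    cross (k + 1) w = cross k w *
      ∏ j ∈ (Tl n k).erase ⟨k, hk⟩, sf (w ⟨k, hk⟩) (w j) := by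
  set Ka : Fin n := ⟨k, hk⟩ with hKadef
  have hinj : ∀ x ∈ (Tl n k).erase Ka, ∀ y ∈ (Tl n k).erase Ka,
      (fun j => (Ka, j)) x = (fun j => (Ka, j)) y → x = y := by
    intro x _ y _ h
    simpa using h
  have hset : Pk n (k + 1) = Pk n k ∪ ((Tl n k).erase Ka).image (fun j => (Ka, j)) := by
    ext pr
    rw [mem_Pk, Finset.mem_union, mem_Pk, Finset.mem_image]
    constructor
    · rintro ⟨hlt, hk1⟩
      rcases lt_or_ge pr.1.val k with h | h
      · exact Or.inl ⟨hlt, h⟩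
      · have h1 : pr.1 = Ka := (Fin.val_eq_val pr.1 Ka).mp (show pr.1.val = k by omega)
        have hltv : pr.1.val < pr.2.val := hlt
        refine Or.inr ⟨pr.2, ?_, ?_⟩
        · rw [Finset.mem_erase, mem_Tl]
          refine ⟨fun hh => ?_, by omega⟩
          rw [← Fin.val_eq_val] at hh
          omega
        · exact Prod.ext h1.symm rfl
    · rintro (⟨hlt, hk1⟩ | ⟨j, hj, rfl⟩)
      · exact ⟨hlt, by omega⟩
      · rw [Finset.mem_erase, mem_Tl] at hj
        have hjv : j.val ≠ k := fun h => hj.1 ((Fin.val_eq_val j Ka).mp (show j.val = k by omega))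
        exact ⟨show k < j.val by omega, show k < k + 1 by omega⟩
  have hdisj : Disjoint (Pk n k) (((Tl n k).erase Ka).image (fun j => (Ka, j))) := by
    rw [Finset.disjoint_left]
    intro pr hpr hpr'
    rw [Finset.mem_image] at hpr'
    obtain ⟨j, _, rfl⟩ := hpr'
    have h1 : ((Ka, j).1).val < k := (mem_Pk.mp hpr).2
    have h2 : ((Ka, j).1).val = k := rfl
    omega
  unfold cross
  rw [hset, Finset.prod_union hdisj, Finset.prod_image hinj]

lemma G_succ (p : ℕ → ℕ) {k : ℕ} (hk : k < n) (hp1 : p k = 1)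
    (hp0 : ∀ j, k < j → p j = 0) : G n p (k + 1) = G n p k := by
  set Ka : Fin n := ⟨k, hk⟩ with hKadef
  set p' : ℕ → ℕ := fun j => if j = k then 0 else p j with hp'def
  have hp'0 : ∀ j : Fin n, k ≤ j.val → p' j.val = 0 := by
    intro j hj
    by_cases h : j.val = k
    · simp [hp'def, h]
    · simp only [hp'def, if_neg h]
      exact hp0 j.val (by omega)
  have hpp : (fun j => if j = Ka.val then p' j + 1 else p' j) = p := by
    funext j
    by_cases h : j = k
    · simp [hp'def, h, hp1, hKadef]
    · simp [hp'def, h, hKadef]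
  have hmono : ∀ w : Equiv.Perm (Fin n), mono p w = XX (w Ka) * mono p' w := by
    intro w
    rw [← mono_addOne p' Ka w, hpp]
  have hKaT : Ka ∈ Tl n k := mem_Tl.mpr (le_of_eq rfl)
  have hdist : ∀ w : Equiv.Perm (Fin n), ∀ i ∈ Tl n k, ∀ j ∈ Tl n k, i ≠ j →
      XX (w i) ≠ XX (w j) := fun w i _ j _ hij =>
    XX_inj (fun h => hij (w.injective h))
  have key : (Tl n k).card • G n p (k + 1) = (Tl n k).card • G n p k := by
    calc (Tl n k).card • G n p (k + 1)
        = ∑ m ∈ Tl n k, G n p (k + 1) := (Finset.sum_const _).symm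
      _ = ∑ m ∈ Tl n k, ∑ w : Equiv.Perm (Fin n), mono p' w * cross k w *
            (XX (w m) * ∏ j ∈ (Tl n k).erase m, sf (w m) (w j)) := by
          refine Finset.sum_congr rfl (fun m hm => ?_)
          rw [show G n p (k + 1) = ∑ w : Equiv.Perm (Fin n), mono p' w * cross k w *
              (XX (w Ka) * ∏ j ∈ (Tl n k).erase Ka, sf (w Ka) (w j)) from ?_]
          · exact sum_swap_prod p' hp'0 hKaT hm
          · refine Finset.sum_congr rfl (fun w _ => ?_)
            rw [hmono w, cross_succ hk w]
            show XX (w Ka) * mono p' w * (cross k w * ∏ j ∈ (Tl n k).erase Ka, sf (w Ka) (w j)) = _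
            ring
      _ = ∑ w : Equiv.Perm (Fin n), mono p' w * cross k w *
            ∑ m ∈ Tl n k, XX (w m) * ∏ j ∈ (Tl n k).erase m, sf (w m) (w j) := by
          rw [Finset.sum_comm]
          exact Finset.sum_congr rfl (fun w _ => (Finset.mul_sum _ _ _).symm)
      _ = ∑ w : Equiv.Perm (Fin n), mono p' w * cross k w * ∑ m ∈ Tl n k, XX (w m) := by
          refine Finset.sum_congr rfl (fun w _ => ?_)
          congr 1
          have := sumT (fun j : Fin n => XX (w j)) (Tl n k) (hdist w)
          simp only [sf_def]
          exact this
      _ = ∑ m ∈ Tl n k, ∑ w : Equiv.Perm (Fin n), mono p' w * cross k w * XX (w m) := by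
          rw [Finset.sum_comm]
          exact Finset.sum_congr rfl (fun w _ => Finset.mul_sum _ _ _)
      _ = ∑ m ∈ Tl n k, ∑ w : Equiv.Perm (Fin n), mono p' w * cross k w * XX (w Ka) := by
          exact Finset.sum_congr rfl (fun m hm => (sum_swap_factor p' hp'0 hKaT hm).symm)
      _ = ∑ m ∈ Tl n k, G n p k := by
          refine Finset.sum_congr rfl (fun m _ => ?_)
          rw [G]
          refine Finset.sum_congr rfl (fun w _ => ?_)
          rw [hmono w]
          ring
      _ = (Tl n k).card • G n p k := Finset.sum_const _
  have hC : ((Tl n k).card : SK n) ≠ 0 :=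
    Nat.cast_ne_zero.mpr (Finset.card_ne_zero_of_mem hKaT)
  rw [nsmul_eq_mul, nsmul_eq_mul] at key
  exact mul_left_cancel₀ hC key

lemma Tl_eq_Ici {k : ℕ} (hk : k < n) : Tl n k = Finset.Ici (⟨k, hk⟩ : Fin n) := by
  ext j
  rw [mem_Tl, Finset.mem_Ici]
  exact Iff.rfl

lemma Tl_card {k : ℕ} (hk : k < n) : (Tl n k).card = n - k := by
  rw [Tl_eq_Ici hk, Fin.card_Ici]

lemma mono_addOne' (p : ℕ → ℕ) {a : ℕ} (ha : a < n) (w : Equiv.Perm (Fin n)) :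
    mono (fun j => if j = a then p j + 1 else p j) w = XX (w ⟨a, ha⟩) * mono p w :=
  mono_addOne p ⟨a, ha⟩ w

lemma schurQ_one (hn0 : 0 < n) :
    schurQ n (fun j => if j = 0 then 1 else 0) 1 = 2 * ∑ i : Fin n, XX i := by
  have K0 : Fin n := ⟨0, hn0⟩
  set q : ℕ → ℕ := fun j => if j = 0 then 1 else 0 with hqdef
  have h1 : G n q 1 = G n q 0 :=
    G_succ q hn0 (by simp [hqdef]) (fun j hj => by simp [hqdef]; omega)
  have hPk0 : Pk n 0 = ∅ :=
    Finset.eq_empty_of_forall_notMem (fun pr h => by have := (mem_Pk.mp h).2; omega)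
  have hcross0 : ∀ w : Equiv.Perm (Fin n), cross 0 w = 1 := by
    intro w
    unfold cross
    rw [hPk0, Finset.prod_empty]
  have hmono0 : ∀ w : Equiv.Perm (Fin n), mono q w = XX (w ⟨0, hn0⟩) := by
    intro w
    unfold mono
    rw [Finset.prod_eq_single_of_mem (⟨0, hn0⟩ : Fin n) (Finset.mem_univ _) ?_]
    · simp [hqdef]
    · intro b _ hb
      have : b.val ≠ 0 := fun h => hb ((Fin.val_eq_val b ⟨0, hn0⟩).mp h)
      simp [hqdef, this]
  have hG0 : G n q 0 = ∑ w : Equiv.Perm (Fin n), XX (w ⟨0, hn0⟩) := by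
    rw [G]
    exact Finset.sum_congr rfl (fun w _ => by rw [hmono0 w, hcross0 w, mul_one])
  have hsum : ∀ m : Fin n, (∑ w : Equiv.Perm (Fin n), XX (w ⟨0, hn0⟩))
      = ∑ w : Equiv.Perm (Fin n), XX (w m) := by
    intro m
    rw [← sum_perm_comp (fun w => XX (w ⟨0, hn0⟩)) (Equiv.swap ⟨0, hn0⟩ m)]
    refine Finset.sum_congr rfl (fun w _ => ?_)
    show XX (w (Equiv.swap (⟨0, hn0⟩ : Fin n) m ⟨0, hn0⟩)) = XX (w m)
    rw [Equiv.swap_apply_left]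
  have hbig : (n : SK n) * (∑ w : Equiv.Perm (Fin n), XX (w ⟨0, hn0⟩))
      = (n.factorial : SK n) * ∑ i : Fin n, XX i := by
    calc (n : SK n) * (∑ w : Equiv.Perm (Fin n), XX (w ⟨0, hn0⟩))
        = ∑ m : Fin n, ∑ w : Equiv.Perm (Fin n), XX (w ⟨0, hn0⟩) := by
          rw [Finset.sum_const, Finset.card_univ, Fintype.card_fin, nsmul_eq_mul]
      _ = ∑ m : Fin n, ∑ w : Equiv.Perm (Fin n), XX (w m) :=
          Finset.sum_congr rfl (fun m _ => hsum m)
      _ = ∑ w : Equiv.Perm (Fin n), ∑ m : Fin n, XX (w m) := Finset.sum_comm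
      _ = ∑ w : Equiv.Perm (Fin n), ∑ i : Fin n, XX i :=
          Finset.sum_congr rfl (fun w _ => Equiv.sum_comp w (fun i => XX i))
      _ = (n.factorial : SK n) * ∑ i : Fin n, XX i := by
          rw [Finset.sum_const, Finset.card_univ, Fintype.card_perm, Fintype.card_fin,
            nsmul_eq_mul]
  have hnne : (n : SK n) ≠ 0 := Nat.cast_ne_zero.mpr (by omega)
  have hS : (∑ w : Equiv.Perm (Fin n), XX (w ⟨0, hn0⟩))
      = ((n - 1).factorial : SK n) * ∑ i : Fin n, XX i := by
    refine mul_left_cancel₀ hnne ?_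
    rw [hbig, ← mul_assoc, ← Nat.cast_mul, Nat.mul_factorial_pred hn0.ne']
  have hfne : ((n - 1).factorial : SK n) ≠ 0 :=
    Nat.cast_ne_zero.mpr (Nat.factorial_ne_zero _)
  rw [schurQ_eq, h1, hG0, hS]
  field_simp

section PartitionFacts

lemma StrictPartition.zero_persist (p : StrictPartition) {i j : ℕ} (hij : i ≤ j)
    (h : p.parts i = 0) : p.parts j = 0 := by
  induction j with
  | zero => exact Nat.le_zero.mp hij ▸ h
  | succ j ih =>
    rcases Nat.lt_or_ge i (j + 1) with hlt | hge
    · have hj : p.parts j = 0 := ih (by omega)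
      rcases p.decr j with h' | h'
      · omega
      · exact h'
    · exact (Nat.le_antisymm hij hge) ▸ h

lemma StrictPartition.exists_zero (p : StrictPartition) : ∃ i, p.parts i = 0 := by
  have key : ∀ v i, p.parts i ≤ v → p.parts (i + v) = 0 := by
    intro v
    induction v with
    | zero => intro i h; simpa using Nat.le_zero.mp h
    | succ v ih =>
      intro i h
      rcases p.decr i with h' | h'
      · have := ih (i + 1) (by omega)
        rw [show i + (v + 1) = i + 1 + v by omega]
        exact this
      · exact p.zero_persist (by omega) h'
  exact ⟨0 + p.parts 0, key (p.parts 0) 0 le_rfl⟩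

lemma StrictPartition.parts_len (p : StrictPartition) : p.parts p.len = 0 := by
  have : p.len ∈ {n | p.parts n = 0} := Nat.sInf_mem (p.exists_zero)
  exact this

lemma StrictPartition.parts_len_le (p : StrictPartition) {j : ℕ} (h : p.len ≤ j) :
    p.parts j = 0 := p.zero_persist h p.parts_len

lemma StrictPartition.parts_ne_zero (p : StrictPartition) {i : ℕ} (h : i < p.len) :
    p.parts i ≠ 0 := fun h0 => Nat.notMem_of_lt_sInf h h0

lemma StrictPartition.parts_strict (p : StrictPartition) {i : ℕ} (h : i + 1 < p.len) :
    p.parts (i + 1) < p.parts i := by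
  rcases p.decr i with h' | h'
  · exact h'
  · exact absurd h' (p.parts_ne_zero h)

end PartitionFacts

/-- Pieri rule for Schur Q-functions: for a strict partition `λ`,
`Q₁ · Q_λ = Σ_{μ ⊃ λ, ℓ(μ)=ℓ(λ)} 2 Q_μ + Σ_{μ ⊃ λ, ℓ(μ)=ℓ(λ)+1} Q_μ`,
where `μ` runs over strict partitions of `|λ|+1` containing `λ`, i.e. the
valid one-box additions of `λ` (row `i` is addable iff `i = 0` or
`λ_{i-1} > λ_i + 1`).  The identity in `Λ` is stated in `n ≥ ℓ(λ)+1`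
variables for every such `n`. -/
theorem schurQ_pieri (lam : StrictPartition) (n : ℕ) (hn : lam.len + 1 ≤ n) :
    schurQ n (fun j => if j = 0 then 1 else 0) 1 * schurQ n lam.parts lam.len =
      ∑ i ∈ (Finset.range (lam.len + 1)).filter
          (fun i => i = 0 ∨ lam.parts i + 1 < lam.parts (i - 1)),
        (if i < lam.len then (2 : FractionRing (MvPolynomial (Fin n) ℚ)) else 1) *
          schurQ n (fun j => if j = i then lam.parts j + 1 else lam.parts j)
            (if i < lam.len then lam.len else lam.len + 1) := by
  classical
  set k := lam.len with hkdef
  have hkn : k < n := by omega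
  have hn0 : 0 < n := by omega
  have hp0 : ∀ j : Fin n, k ≤ j.val → lam.parts j.val = 0 := fun j hj => lam.parts_len_le hj
  have hpk : lam.parts k = 0 := lam.parts_len
  -- expansion of (∑ XX) * G
  have hTG : (∑ i : Fin n, XX i) * G n lam.parts k
      = ∑ m : Fin n, G n (fun j => if j = m.val then lam.parts j + 1 else lam.parts j) k := by
    rw [G, Finset.mul_sum]
    have step : ∀ w : Equiv.Perm (Fin n), (∑ i : Fin n, XX i) * (mono lam.parts w * cross k w)
        = ∑ m : Fin n, mono (fun j => if j = m.val then lam.parts j + 1 else lam.parts j) w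
            * cross k w := by
      intro w
      rw [← Equiv.sum_comp w (fun i => XX i), Finset.sum_mul]
      refine Finset.sum_congr rfl (fun m _ => ?_)
      rw [mono_addOne]
      ring
    rw [Finset.sum_congr rfl (fun w _ => step w), Finset.sum_comm]
    rfl
  -- tail terms are all equal
  have hKkT : (⟨k, hkn⟩ : Fin n) ∈ Tl n k := mem_Tl.mpr (le_refl k)
  have hconst : ∀ m ∈ Tl n k,
      G n (fun j => if j = m.val then lam.parts j + 1 else lam.parts j) k
        = G n (fun j => if j = k then lam.parts j + 1 else lam.parts j) k := by
    intro m hm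
    have e1 : G n (fun j => if j = m.val then lam.parts j + 1 else lam.parts j) k
        = ∑ w : Equiv.Perm (Fin n), mono lam.parts w * cross k w * XX (w m) := by
      rw [G]
      refine Finset.sum_congr rfl (fun w _ => ?_)
      rw [mono_addOne]
      ring
    have e2 : G n (fun j => if j = k then lam.parts j + 1 else lam.parts j) k
        = ∑ w : Equiv.Perm (Fin n), mono lam.parts w * cross k w * XX (w ⟨k, hkn⟩) := by
      rw [G]
      refine Finset.sum_congr rfl (fun w _ => ?_)
      rw [mono_addOne' lam.parts hkn]
      ring
    rw [e1, e2]
    exact (sum_swap_factor lam.parts hp0 hm hKkT)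
  have hsplitset : Finset.univ.filter (fun m : Fin n => ¬ m.val < k) = Tl n k := by
    ext m
    simp only [Finset.mem_filter, Finset.mem_univ, true_and, mem_Tl]
    omega
  have hsplit : ∑ m : Fin n, G n (fun j => if j = m.val then lam.parts j + 1 else lam.parts j) k
      = (∑ m ∈ Finset.univ.filter (fun m : Fin n => m.val < k),
          G n (fun j => if j = m.val then lam.parts j + 1 else lam.parts j) k)
        + (n - k) • G n (fun j => if j = k then lam.parts j + 1 else lam.parts j) k := by
    rw [← Finset.sum_filter_add_sum_filter_not Finset.univ (fun m : Fin n => m.val < k)]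
    congr 1
    rw [hsplitset, Finset.sum_congr rfl hconst, Finset.sum_const, Tl_card hkn]
  have hhead : ∑ m ∈ Finset.univ.filter (fun m : Fin n => m.val < k),
        G n (fun j => if j = m.val then lam.parts j + 1 else lam.parts j) k
      = ∑ i ∈ Finset.range k,
          G n (fun j => if j = i then lam.parts j + 1 else lam.parts j) k := by
    refine Finset.sum_bij' (fun m _ => m.val)
      (fun i hi => (⟨i, by have := Finset.mem_range.mp hi; omega⟩ : Fin n)) ?_ ?_ ?_ ?_ ?_
    · intro m hm
      rw [Finset.mem_range]
      exact (Finset.mem_filter.mp hm).2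
    · intro i hi
      rw [Finset.mem_filter]
      exact ⟨Finset.mem_univ _, Finset.mem_range.mp hi⟩
    · intro m _
      rfl
    · intro i _
      rfl
    · intro m _
      rfl
  -- the new-part term
  have hGnew : G n (fun j => if j = k then lam.parts j + 1 else lam.parts j) (k + 1)
      = G n (fun j => if j = k then lam.parts j + 1 else lam.parts j) k := by
    refine G_succ _ hkn (by simp [hpk]) (fun j hj => ?_)
    rw [if_neg (by omega)]
    exact lam.parts_len_le (by omega)
  -- nonzero constants
  have hfne : ((n - k).factorial : SK n) ≠ 0 :=
    Nat.cast_ne_zero.mpr (Nat.factorial_ne_zero _)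
  have hfne' : ((n - (k + 1)).factorial : SK n) ≠ 0 :=
    Nat.cast_ne_zero.mpr (Nat.factorial_ne_zero _)
  have hnk0 : 0 < n - k := by omega
  have hfacteq : ((n - k).factorial : SK n)
      = ((n - k : ℕ) : SK n) * ((n - (k + 1)).factorial : SK n) := by
    rw [← Nat.cast_mul]
    congr 1
    rw [show n - (k + 1) = (n - k) - 1 by omega]
    exact (Nat.mul_factorial_pred hnk0.ne').symm
  -- assemble
  rw [schurQ_one hn0, schurQ_eq, Finset.sum_filter, Finset.sum_range_succ]
  have lhs_eq : 2 * (∑ i : Fin n, XX i) * ((2 : SK n) ^ k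
        * ((n - k).factorial : SK n)⁻¹ * G n lam.parts k)
      = (2 : SK n) ^ (k + 1) * ((n - k).factorial : SK n)⁻¹
          * ((∑ i ∈ Finset.range k,
              G n (fun j => if j = i then lam.parts j + 1 else lam.parts j) k)
            + (n - k) • G n (fun j => if j = k then lam.parts j + 1 else lam.parts j) k) := by
    rw [← hhead, ← hsplit, ← hTG, pow_succ]
    ring
  rw [lhs_eq, ← hGnew, mul_add, Finset.mul_sum]
  congr 1
  · -- terms i < k
    refine Finset.sum_congr rfl (fun i hi => ?_)
    have hik : i < k := Finset.mem_range.mp hi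
    rw [if_pos hik, if_pos hik]
    by_cases hcond : i = 0 ∨ lam.parts i + 1 < lam.parts (i - 1)
    · rw [if_pos hcond, schurQ_eq, pow_succ]
      ring
    · rw [if_neg hcond]
      push_neg at hcond
      obtain ⟨hne0, hle⟩ := hcond
      obtain ⟨i', rfl⟩ : ∃ i', i = i' + 1 := ⟨i - 1, by omega⟩
      have hstrict : lam.parts (i' + 1) < lam.parts i' := lam.parts_strict (by omega)
      have heq : lam.parts i' = lam.parts (i' + 1) + 1 := by
        simp only [Nat.add_sub_cancel] at hle
        omega
      have hzero : G n (fun j => if j = i' + 1 then lam.parts j + 1 else lam.parts j) k = 0 := by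
        refine G_eq_zero_adj (a := ⟨i', by omega⟩) (b := ⟨i' + 1, by omega⟩) _ rfl hik ?_
        show (if i' = i' + 1 then lam.parts i' + 1 else lam.parts i')
            = (if i' + 1 = i' + 1 then lam.parts (i' + 1) + 1 else lam.parts (i' + 1))
        rw [if_neg (by omega), if_pos rfl]
        omega
      rw [hzero, mul_zero]
  · -- the term i = k
    rw [if_neg (lt_irrefl k)]
    by_cases hcond : k = 0 ∨ lam.parts k + 1 < lam.parts (k - 1)
    · rw [if_pos hcond, if_neg (lt_irrefl k), schurQ_eq, one_mul, nsmul_eq_mul]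
      rw [hfacteq]
      have hnkne : ((n - k : ℕ) : SK n) ≠ 0 := Nat.cast_ne_zero.mpr (by omega)
      field_simp
    · rw [if_neg hcond]
      push_neg at hcond
      obtain ⟨hne0, hle⟩ := hcond
      have hk1 : lam.parts (k - 1) = 1 := by
        have h1 : lam.parts (k - 1) ≠ 0 := lam.parts_ne_zero (by omega)
        omega
      have hzero : G n (fun j => if j = k then lam.parts j + 1 else lam.parts j) (k + 1) = 0 := by
        refine G_eq_zero_adj (a := ⟨k - 1, by omega⟩) (b := ⟨k, by omega⟩) _
          (show k - 1 + 1 = k by omega) (show k < k + 1 by omega) ?_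
        show (if k - 1 = k then lam.parts (k - 1) + 1 else lam.parts (k - 1))
            = (if k = k then lam.parts k + 1 else lam.parts k)
        rw [if_neg (by omega), if_pos rfl]
        omega
      rw [hzero]
      simp
end SchurAux
end
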